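/- Let ψ be the (n+1)-cycle on {0, 1, …, n} given by ψ(j) = j+1 mod (n+1), and let ℓ ≥ 0 be an even integer. Then there exists no perfect (ψ^ℓ, k)-permutiple [a_0; a_1, …, a_n] for any integer k > 1. -/

import Mathlib

/-- Value of the finite simple continued fraction `[x₀; x₁, …, xₙ]`. -/
def cfv : List ℚ → ℚ
  | [] => 0
  | [x] => x
  | x :: y :: t => x + 1 / cfv (y :: t)

/-- The continuant `K(x₀, …, xₙ)`: `K() = 1`, `K(x₀) = x₀`, and the usual
three-term recurrence. -/
def cont : List ℕ → ℕ
  | [] => 1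
  | [x] => x
  | x :: y :: t => x * cont (y :: t) + cont t

/-- The digit string of `a`, as a list of rationals. -/
def digitsQ {N : ℕ} (a : Fin N → ℕ) : List ℚ := (List.ofFn a).map (fun x => (x : ℚ))

/-- `[a₀; a₁, …, aₙ]` (canonical: positive digits, last digit ≥ 2) is a
`(σ,k)`-permutiple: it equals `k` times the continued fraction of the permuted digits. -/
def IsPermutiple {n : ℕ} (a : Fin (n+1) → ℕ) (σ : Equiv.Perm (Fin (n+1))) (k : ℕ) : Prop :=
  (∀ j, 0 < a j) ∧ 2 ≤ a (Fin.last n) ∧ 1 < k ∧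
    cfv (digitsQ a) = k * cfv (digitsQ (a ∘ σ))

/-- A `(σ,k)`-permutiple is continuant-preserving if
`K(a₀,…,aₙ) = K(a_{σ(0)},…,a_{σ(n)})`. -/
def ContinuantPreserving {n : ℕ} (a : Fin (n+1) → ℕ) (σ : Equiv.Perm (Fin (n+1))) : Prop :=
  cont (List.ofFn a) = cont (List.ofFn (a ∘ σ))

/-- A `(σ,k)`-permutiple is perfect if `a_j = k·a_{σ(j)}` for even `j` and
`a_{σ(j)} = k·a_j` for odd `j`. -/
def IsPerfect {n : ℕ} (a : Fin (n+1) → ℕ) (σ : Equiv.Perm (Fin (n+1))) (k : ℕ) : Prop :=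
  ∀ j : Fin (n+1), (Even (j : ℕ) → a j = k * a (σ j)) ∧ (Odd (j : ℕ) → a (σ j) = k * a j)

/-- A `(σ,k)`-permutiple is symmetric if `a_j·a_{n−j} = a_{σ(j)}·a_{σ(n−j)}` for all `j`. -/
def IsSymmetric {n : ℕ} (a : Fin (n+1) → ℕ) (σ : Equiv.Perm (Fin (n+1))) : Prop :=
  ∀ j : Fin (n+1), a j * a j.rev = a (σ j) * a (σ j.rev)

/-- A Landess permutiple: a continuant-preserving `(σ,k)`-permutiple with
`q_{n−1} = q'_{n−1}` and `p_{n−1} = k·p'_{n−1}`. -/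
def IsLandess {n : ℕ} (a : Fin (n+1) → ℕ) (σ : Equiv.Perm (Fin (n+1))) (k : ℕ) : Prop :=
  IsPermutiple a σ k ∧ ContinuantPreserving a σ ∧
    cont ((List.ofFn a).tail.dropLast) = cont ((List.ofFn (a ∘ σ)).tail.dropLast) ∧
    cont ((List.ofFn a).dropLast) = k * cont ((List.ofFn (a ∘ σ)).dropLast)

private lemma range_even_card (m : ℕ) :
    ((Finset.range m).filter (fun j => Even j)).card = (m+1)/2 ∧
    ((Finset.range m).filter (fun j => ¬ Even j)).card = m/2 := by
  induction m with
  | zero => simp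
  | succ m ih =>
    rw [Finset.range_add_one, Finset.filter_insert, Finset.filter_insert]
    have hm : m ∉ Finset.range m := by simp
    rcases Nat.even_or_odd m with h | h
    · have h2 := Nat.even_iff.mp h
      rw [if_pos h, if_neg (by simpa using h)]
      rw [Finset.card_insert_of_notMem (fun hc => hm (Finset.mem_of_mem_filter m hc))]
      exact ⟨by rw [ih.1]; omega, by rw [ih.2]; omega⟩
    · have h2 := Nat.odd_iff.mp h
      have h3 : ¬ Even m := by simpa [Nat.even_iff] using h2
      rw [if_neg h3, if_pos h3]
      rw [Finset.card_insert_of_notMem (fun hc => hm (Finset.mem_of_mem_filter m hc))]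
      exact ⟨by rw [ih.1]; omega, by rw [ih.2]; omega⟩

private lemma fin_filter_card (m : ℕ) (p : ℕ → Prop) [DecidablePred p] :
    (Finset.filter (fun j : Fin m => p (j : ℕ)) Finset.univ).card
      = ((Finset.range m).filter p).card := by
  apply Finset.card_bij (fun (j : Fin m) _ => (j : ℕ))
  · intro j hj
    simp only [Finset.mem_filter, Finset.mem_range, Finset.mem_univ, true_and] at hj ⊢
    exact ⟨j.isLt, hj⟩
  · intro x _ y _ h
    exact Fin.ext h
  · intro b hb
    simp only [Finset.mem_filter, Finset.mem_range] at hb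
    exact ⟨⟨b, hb.1⟩, by simp [hb.2], rfl⟩

private lemma finRotate_pow_val {n ℓ : ℕ} (x : Fin (n+1)) :
    ((((finRotate (n+1)) ^ ℓ) x : Fin (n+1)) : ℕ) = ((x : ℕ) + ℓ) % (n+1) := by
  induction ℓ with
  | zero => simp [Nat.mod_eq_of_lt x.isLt]
  | succ ℓ ih =>
    rw [pow_succ', Equiv.Perm.mul_apply, finRotate_succ_apply, Fin.val_add, ih,
      Fin.val_one', ← Nat.add_mod, Nat.add_assoc]

/-- Let `ψ` be the `(n+1)`-cycle `j ↦ j+1 (mod n+1)` and `ℓ ≥ 0` even. There is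
no perfect `(ψ^ℓ, k)`-permutiple for any `k > 1`. -/
theorem stmt12 {n : ℕ} (ℓ k : ℕ) (hl : Even ℓ) (a : Fin (n+1) → ℕ) :
    ¬ (IsPermutiple a ((finRotate (n+1)) ^ ℓ) k ∧ IsPerfect a ((finRotate (n+1)) ^ ℓ) k) := by
  rintro ⟨⟨hpos, -, hk, -⟩, hperf⟩
  set σ : Equiv.Perm (Fin (n+1)) := (finRotate (n+1)) ^ ℓ with hσ
  rcases Nat.even_or_odd n with hn | hn
  · -- `n` even : counting/product argument, valid for any permutation σ
    have hcards : (Finset.filter (fun j : Fin (n+1) => Even (j : ℕ)) Finset.univ).card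
        = (Finset.filter (fun j : Fin (n+1) => ¬ Even (j : ℕ)) Finset.univ).card + 1 := by
      rw [fin_filter_card (n+1) (fun j => Even j),
        fin_filter_card (n+1) (fun j => ¬ Even j),
        (range_even_card (n+1)).1, (range_even_card (n+1)).2]
      have := Nat.even_iff.mp hn
      omega
    have hsplit : ∀ f : Fin (n+1) → ℕ,
        (∏ j ∈ Finset.filter (fun j : Fin (n+1) => Even (j : ℕ)) Finset.univ, f j) *
          (∏ j ∈ Finset.filter (fun j : Fin (n+1) => ¬ Even (j : ℕ)) Finset.univ, f j)
          = ∏ j, f j := fun f =>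
      Finset.prod_filter_mul_prod_filter_not Finset.univ _ f
    have h1 : (∏ j ∈ Finset.filter (fun j : Fin (n+1) => Even (j : ℕ)) Finset.univ, a j)
        = k ^ (Finset.filter (fun j : Fin (n+1) => Even (j : ℕ)) Finset.univ).card *
          ∏ j ∈ Finset.filter (fun j : Fin (n+1) => Even (j : ℕ)) Finset.univ, a (σ j) := by
      rw [← Finset.prod_const, ← Finset.prod_mul_distrib]
      refine Finset.prod_congr rfl fun j hj => ?_
      exact (hperf j).1 (by simpa using hj)
    have h2 : (∏ j ∈ Finset.filter (fun j : Fin (n+1) => ¬ Even (j : ℕ)) Finset.univ, a (σ j))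
        = k ^ (Finset.filter (fun j : Fin (n+1) => ¬ Even (j : ℕ)) Finset.univ).card *
          ∏ j ∈ Finset.filter (fun j : Fin (n+1) => ¬ Even (j : ℕ)) Finset.univ, a j := by
      rw [← Finset.prod_const, ← Finset.prod_mul_distrib]
      refine Finset.prod_congr rfl fun j hj => ?_
      exact (hperf j).2 (Nat.not_even_iff_odd.mp (by simpa using hj))
    have hcomp : ∏ j, a (σ j) = ∏ j, a j := Equiv.prod_comp σ a
    set E := (Finset.filter (fun j : Fin (n+1) => Even (j : ℕ)) Finset.univ).card
    set O := (Finset.filter (fun j : Fin (n+1) => ¬ Even (j : ℕ)) Finset.univ).card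
    set Pe := ∏ j ∈ Finset.filter (fun j : Fin (n+1) => Even (j : ℕ)) Finset.univ, a (σ j)
      with hPe
    set Po := ∏ j ∈ Finset.filter (fun j : Fin (n+1) => ¬ Even (j : ℕ)) Finset.univ, a j
      with hPo
    have hkey : k ^ E * (Pe * Po) = k ^ O * (Pe * Po) := by
      have hB := hsplit (fun j => a (σ j))
      rw [h2, hcomp, ← hsplit a, h1, ← hPe, ← hPo] at hB
      ring_nf at hB ⊢
      linarith [hB]
    have hP : 0 < Pe * Po :=
      Nat.mul_pos (Finset.prod_pos fun j _ => hpos _) (Finset.prod_pos fun j _ => hpos _)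
    have hpow : k ^ E = k ^ O := Nat.eq_of_mul_eq_mul_right hP hkey
    rw [hcards, pow_succ] at hpow
    have hk0 : 0 < k ^ O := Nat.pow_pos (by omega)
    have : k = 1 := by
      have := Nat.eq_of_mul_eq_mul_left hk0
        (by linarith [hpow] : k ^ O * k = k ^ O * 1)
      omega
    omega
  · -- `n` odd : orbit of `0` consists of even indices, values decrease forever
    have h2 : 2 ∣ (n + 1) := by
      have := Nat.odd_iff.mp hn; omega
    have hEvenσ : ∀ x : Fin (n+1), Even (x : ℕ) → Even ((σ x : ℕ)) := by
      intro x hx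
      rw [Nat.even_iff] at hx ⊢
      rw [hσ, finRotate_pow_val, Nat.mod_mod_of_dvd _ h2, Nat.add_mod, hx,
        Nat.even_iff.mp hl]
    have chain : ∀ m : ℕ, Even ((((σ ^ m) 0 : Fin (n+1))) : ℕ) ∧
        a 0 = k ^ m * a ((σ ^ m) 0) := by
      intro m
      induction m with
      | zero => simp
      | succ m ih =>
        have he := ih.1
        have step := (hperf ((σ ^ m) 0)).1 he
        have happ : (σ ^ (m+1)) 0 = σ ((σ ^ m) 0) := by
          rw [pow_succ', Equiv.Perm.mul_apply]
        refine ⟨?_, ?_⟩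
        · rw [happ]; exact hEvenσ _ he
        · rw [happ, pow_succ, ih.2, step, Nat.mul_assoc]
    have hm : 0 < orderOf σ := orderOf_pos σ
    have hfix : (σ ^ orderOf σ) 0 = 0 := by rw [pow_orderOf_eq_one]; rfl
    have heq : a 0 = k ^ orderOf σ * a 0 := by
      have := (chain (orderOf σ)).2
      rwa [hfix] at this
    have hkm : 2 ≤ k ^ orderOf σ :=
      le_trans hk (Nat.le_self_pow hm.ne' k)
    have ha0 := hpos 0
    nlinarith [heq, hkm, ha0]
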